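/- Let μ be a distribution over [q]^E satisfying the conditional independence property for the line graph of G = (V,E). For any f : Ω(μ) → ℝ and S₁, S₂ ⊆ E with ∂S₁ ∩ S₂ = ∅, one has E_μ[Var_{S₁}[μ_{S₂}[f]]] ≤ E_μ[Var_{S₁}[μ_{S₁∩S₂}[f]]]. -/

import Mathlib

open scoped Classical

/-- Expectation of `f` under a weight function `μ`. -/
noncomputable def expct {α : Type*} [Fintype α] (μ f : α → ℝ) : ℝ := ∑ x, μ x * f x

/-- Conditional expectation of `f` under `μ`, resampling the coordinates in `S`
given that the coordinates outside `S` are fixed to those of `σ`. -/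
noncomputable def cExp {ι : Type*} [Fintype ι] [DecidableEq ι] {q : ℕ}
    (μ : (ι → Fin q) → ℝ) (f : (ι → Fin q) → ℝ) (S : Finset ι) (σ : ι → Fin q) : ℝ :=
  (∑ τ, if ∀ i ∉ S, τ i = σ i then μ τ * f τ else 0) /
    (∑ τ, if ∀ i ∉ S, τ i = σ i then μ τ else 0)

/-- Conditional variance of `f` on `S` given the configuration `σ` outside `S`. -/
noncomputable def cVar {ι : Type*} [Fintype ι] [DecidableEq ι] {q : ℕ}
    (μ : (ι → Fin q) → ℝ) (f : (ι → Fin q) → ℝ) (S : Finset ι) (σ : ι → Fin q) : ℝ :=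
  cExp μ (fun τ => f τ ^ 2) S σ - (cExp μ f S σ) ^ 2

/-- The line graph of `G`: vertices are the edges of `G`, two distinct edges being
adjacent when they share an endpoint. -/
def lineG {V : Type*} [Fintype V] [DecidableEq V] (G : SimpleGraph V) [DecidableRel G.Adj] :
    SimpleGraph ↥G.edgeFinset :=
  SimpleGraph.fromRel (fun e e' => ∃ v, v ∈ (e : Sym2 V) ∧ v ∈ (e' : Sym2 V))

open Finset

section Helpers

variable {ι : Type*} [Fintype ι] [DecidableEq ι] {q : ℕ}

/-- Normalizing constant. -/
noncomputable def Zf (μ : (ι → Fin q) → ℝ) (S : Finset ι) (σ : ι → Fin q) : ℝ :=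
  ∑ τ, if ∀ i ∉ S, τ i = σ i then μ τ else 0

/-- Numerator. -/
noncomputable def Nf (μ f : (ι → Fin q) → ℝ) (S : Finset ι) (σ : ι → Fin q) : ℝ :=
  ∑ τ, if ∀ i ∉ S, τ i = σ i then μ τ * f τ else 0

variable {μ : (ι → Fin q) → ℝ}

lemma cExp_def (f : (ι → Fin q) → ℝ) (S : Finset ι) (σ : ι → Fin q) :
    cExp μ f S σ = Nf μ f S σ / Zf μ S σ := rfl

lemma Zf_nonneg (hnn : ∀ σ, 0 ≤ μ σ) (S : Finset ι) (σ : ι → Fin q) : 0 ≤ Zf μ S σ := by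
  refine sum_nonneg fun τ _ => ?_
  split <;> simp [hnn τ]

lemma le_Zf (hnn : ∀ σ, 0 ≤ μ σ) {S : Finset ι} {σ τ : ι → Fin q}
    (h : ∀ i ∉ S, τ i = σ i) : μ τ ≤ Zf μ S σ := by
  have := Finset.single_le_sum (f := fun ρ => if ∀ i ∉ S, ρ i = σ i then μ ρ else 0)
    (fun ρ _ => by split <;> simp [hnn ρ]) (mem_univ τ)
  unfold Zf
  rwa [if_pos h] at this

lemma mu_eq_zero (hnn : ∀ σ, 0 ≤ μ σ) {S : Finset ι} {σ τ : ι → Fin q}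
    (h : ∀ i ∉ S, τ i = σ i) (hz : Zf μ S σ = 0) : μ τ = 0 :=
  le_antisymm (hz ▸ le_Zf hnn h) (hnn τ)

lemma Zf_congr {S : Finset ι} {σ σ' : ι → Fin q} (h : ∀ i ∉ S, σ' i = σ i) :
    Zf μ S σ' = Zf μ S σ := by
  refine sum_congr rfl fun τ _ => ?_
  have : (∀ i ∉ S, τ i = σ' i) ↔ (∀ i ∉ S, τ i = σ i) :=
    ⟨fun ht i hi => (ht i hi).trans (h i hi), fun ht i hi => (ht i hi).trans (h i hi).symm⟩
  simp [this]

lemma Nf_congr (f : (ι → Fin q) → ℝ) {S : Finset ι} {σ σ' : ι → Fin q}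
    (h : ∀ i ∉ S, σ' i = σ i) : Nf μ f S σ' = Nf μ f S σ := by
  refine sum_congr rfl fun τ _ => ?_
  have : (∀ i ∉ S, τ i = σ' i) ↔ (∀ i ∉ S, τ i = σ i) :=
    ⟨fun ht i hi => (ht i hi).trans (h i hi), fun ht i hi => (ht i hi).trans (h i hi).symm⟩
  simp [this]

lemma cExp_congr (f : (ι → Fin q) → ℝ) {S : Finset ι} {σ σ' : ι → Fin q}
    (h : ∀ i ∉ S, σ' i = σ i) : cExp μ f S σ' = cExp μ f S σ := by
  rw [cExp_def, cExp_def, Zf_congr h, Nf_congr f h]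

/-- Core regrouping lemma. -/
lemma sum_cExp (hnn : ∀ σ, 0 ≤ μ σ) (f : (ι → Fin q) → ℝ) (A : Finset ι)
    (p : (ι → Fin q) → Prop) [DecidablePred p]
    (hp : ∀ τ ρ : ι → Fin q, (∀ i ∉ A, ρ i = τ i) → p τ → p ρ) :
    ∑ τ, (if p τ then μ τ * cExp μ f A τ else 0)
      = ∑ τ, (if p τ then μ τ * f τ else 0) := by
  have step1 : ∀ τ, (if p τ then μ τ * cExp μ f A τ else 0)
      = ∑ ρ, if p τ ∧ (∀ i ∉ A, ρ i = τ i) then μ τ * (μ ρ * f ρ) / Zf μ A τ else 0 := by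
    intro τ
    by_cases hpτ : p τ
    · simp only [hpτ, if_true, true_and, cExp_def, Nf]
      rw [Finset.sum_div, Finset.mul_sum]
      refine Finset.sum_congr rfl fun ρ _ => ?_
      split
      · ring
      · simp
    · simp [hpτ]
  simp only [step1]
  rw [Finset.sum_comm]
  refine Finset.sum_congr rfl fun ρ _ => ?_
  by_cases hpρ : p ρ
  · have step2 : ∀ τ, (if p τ ∧ (∀ i ∉ A, ρ i = τ i) then μ τ * (μ ρ * f ρ) / Zf μ A τ else 0)
        = (μ ρ * f ρ / Zf μ A ρ) * (if ∀ i ∉ A, τ i = ρ i then μ τ else 0) := by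
      intro τ
      by_cases hc : ∀ i ∉ A, τ i = ρ i
      · have hc' : ∀ i ∉ A, ρ i = τ i := fun i hi => (hc i hi).symm
        have hpτ : p τ := hp ρ τ hc hpρ
        have hz : Zf μ A τ = Zf μ A ρ := Zf_congr hc
        rw [if_pos ⟨hpτ, hc'⟩, if_pos hc, hz]
        ring
      · have hc' : ¬ ∀ i ∉ A, ρ i = τ i := fun h => hc fun i hi => (h i hi).symm
        simp [hc, hc']
    simp only [step2]
    rw [← Finset.mul_sum]
    change μ ρ * f ρ / Zf μ A ρ * Zf μ A ρ = _
    rcases eq_or_lt_of_le (Zf_nonneg hnn A ρ) with hz | hz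
    · have : μ ρ = 0 := mu_eq_zero hnn (fun i _ => rfl) hz.symm
      simp [this, ← hz, hpρ]
    · rw [div_mul_cancel₀ _ (ne_of_gt hz)]
      simp [hpρ]
  · have : ∀ τ, (if p τ ∧ (∀ i ∉ A, ρ i = τ i) then μ τ * (μ ρ * f ρ) / Zf μ A τ else 0) = 0 := by
      intro τ
      by_cases hc : ∀ i ∉ A, ρ i = τ i
      · have : ¬ p τ := fun hpτ => hpρ (hp τ ρ hc hpτ)
        simp [this]
      · simp [hc]
    simp [this, hpρ]

lemma expct_cExp (hnn : ∀ σ, 0 ≤ μ σ) (f : (ι → Fin q) → ℝ) (S : Finset ι) :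
    expct μ (fun σ => cExp μ f S σ) = expct μ f := by
  have := sum_cExp hnn f S (fun _ => True) (fun _ _ _ _ => trivial)
  simpa [expct] using this

lemma cExp_tower (hnn : ∀ σ, 0 ≤ μ σ) (f : (ι → Fin q) → ℝ) {A B : Finset ι} (hAB : A ⊆ B)
    (σ : ι → Fin q) : cExp μ (fun τ => cExp μ f A τ) B σ = cExp μ f B σ := by
  rw [cExp_def, cExp_def]
  congr 1
  simp only [Nf]
  exact sum_cExp hnn f A (fun τ => ∀ i ∉ B, τ i = σ i)
    (fun τ ρ h hpτ i hi => ((h i (fun hA => hi (hAB hA))).trans (hpτ i hi)))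

lemma cExp_sq_le (hnn : ∀ σ, 0 ≤ μ σ) (f : (ι → Fin q) → ℝ) (S : Finset ι) (σ : ι → Fin q) :
    (cExp μ f S σ) ^ 2 ≤ cExp μ (fun τ => f τ ^ 2) S σ := by
  rcases eq_or_lt_of_le (Zf_nonneg hnn S σ) with hz | hz
  · simp [cExp_def, ← hz]
  · have hcs : (Nf μ f S σ) ^ 2 ≤ Zf μ S σ * Nf μ (fun τ => f τ ^ 2) S σ := by
      have := sum_sq_le_sum_mul_sum_of_sq_eq_mul Finset.univ
        (r := fun τ => if ∀ i ∉ S, τ i = σ i then μ τ * f τ else 0)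
        (f := fun τ => if ∀ i ∉ S, τ i = σ i then μ τ else 0)
        (g := fun τ => if ∀ i ∉ S, τ i = σ i then μ τ * f τ ^ 2 else 0)
        (fun τ _ => by split <;> simp [hnn τ])
        (fun τ _ => by
          split
          · exact mul_nonneg (hnn τ) (sq_nonneg _)
          · simp)
        (fun τ _ => by
          by_cases hc : ∀ i ∉ S, τ i = σ i
          · rw [if_pos hc, if_pos hc, if_pos hc]; ring
          · rw [if_neg hc, if_neg hc, if_neg hc]; simp)
      exact this
    rw [cExp_def, cExp_def, div_pow]
    rw [div_le_div_iff₀ (by positivity) hz]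
    calc Nf μ f S σ ^ 2 * Zf μ S σ ≤ (Zf μ S σ * Nf μ (fun τ => f τ ^ 2) S σ) * Zf μ S σ := by
          exact mul_le_mul_of_nonneg_right hcs (le_of_lt hz)
      _ = Nf μ (fun τ => f τ ^ 2) S σ * Zf μ S σ ^ 2 := by ring

lemma cExp_mul_left (f h : (ι → Fin q) → ℝ) (S : Finset ι) (σ : ι → Fin q)
    (hh : ∀ τ, (∀ i ∉ S, τ i = σ i) → h τ = h σ) :
    cExp μ (fun τ => h τ * f τ) S σ = h σ * cExp μ f S σ := by
  rw [cExp_def, cExp_def, ← mul_div_assoc]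
  congr 1
  rw [Nf, Nf, Finset.mul_sum]
  refine sum_congr rfl fun τ _ => ?_
  by_cases hc : ∀ i ∉ S, τ i = σ i
  · rw [if_pos hc, if_pos hc, hh τ hc]; ring
  · rw [if_neg hc, if_neg hc]; simp

lemma cExp_sub (f g : (ι → Fin q) → ℝ) (S : Finset ι) (σ : ι → Fin q) :
    cExp μ (fun τ => f τ - g τ) S σ = cExp μ f S σ - cExp μ g S σ := by
  rw [cExp_def, cExp_def, cExp_def, ← sub_div]
  congr 1
  rw [Nf, Nf, Nf, ← Finset.sum_sub_distrib]
  refine sum_congr rfl fun τ _ => ?_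
  split
  · ring
  · simp

lemma expct_mono {f g : (ι → Fin q) → ℝ} (hnn : ∀ σ, 0 ≤ μ σ) (h : ∀ σ, f σ ≤ g σ) :
    expct μ f ≤ expct μ g :=
  sum_le_sum fun σ _ => mul_le_mul_of_nonneg_left (h σ) (hnn σ)

lemma expct_congr {f g : (ι → Fin q) → ℝ} (h : ∀ σ, μ σ ≠ 0 → f σ = g σ) :
    expct μ f = expct μ g := by
  refine sum_congr rfl fun σ _ => ?_
  by_cases hσ : μ σ = 0
  · simp [hσ]
  · rw [h σ hσ]

lemma expct_sub (f g : (ι → Fin q) → ℝ) :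
    expct μ (fun σ => f σ - g σ) = expct μ f - expct μ g := by
  rw [expct, expct, expct, ← Finset.sum_sub_distrib]
  exact sum_congr rfl fun σ _ => by ring

end Helpers

section Comm

variable {ι : Type*} [Fintype ι] [DecidableEq ι] {q : ℕ} {μ : (ι → Fin q) → ℝ}

noncomputable def Kf (μ : (ι → Fin q) → ℝ) (S₁ S₂ : Finset ι) (σ ρ : ι → Fin q) : ℝ :=
  ∑ τ, if (∀ i ∉ S₁, τ i = σ i) ∧ (∀ i ∉ S₂, τ i = ρ i) then μ τ else 0

lemma Kf_eq_zero {S₁ S₂ : Finset ι} {σ ρ : ι → Fin q}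
    (h : ¬ ∀ i, i ∉ S₁ → i ∉ S₂ → ρ i = σ i) : Kf μ S₁ S₂ σ ρ = 0 := by
  push_neg at h
  obtain ⟨i, h1, h2, hne⟩ := h
  refine Finset.sum_eq_zero fun τ _ => ?_
  rw [if_neg]
  rintro ⟨ha, hb⟩
  exact hne ((hb i h2).symm.trans (ha i h1))

lemma cExp_cExp (hnn : ∀ σ, 0 ≤ μ σ) (S₁ S₂ : Finset ι) (v : (ι → Fin q) → ℝ)
    (σ : ι → Fin q) :
    cExp μ (fun τ => cExp μ v S₂ τ) S₁ σ
      = (∑ ρ, μ ρ * v ρ * Kf μ S₁ S₂ σ ρ / Zf μ S₂ ρ) / Zf μ S₁ σ := by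
  rw [cExp_def]
  congr 1
  simp only [Nf]
  have step1 : ∀ τ, (if (∀ i ∉ S₁, τ i = σ i) then μ τ * cExp μ v S₂ τ else 0)
      = ∑ ρ, if (∀ i ∉ S₁, τ i = σ i) ∧ (∀ i ∉ S₂, ρ i = τ i)
          then μ τ * (μ ρ * v ρ) / Zf μ S₂ τ else 0 := by
    intro τ
    by_cases hpτ : ∀ i ∉ S₁, τ i = σ i
    · rw [if_pos hpτ, cExp_def]
      unfold Nf
      rw [Finset.sum_div, Finset.mul_sum]
      refine Finset.sum_congr rfl fun ρ _ => ?_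
      by_cases hc : ∀ i ∉ S₂, ρ i = τ i
      · rw [if_pos hc, if_pos ⟨hpτ, hc⟩]; unfold Zf; ring
      · rw [if_neg hc, if_neg (by rintro ⟨_, h⟩; exact hc h)]; simp
    · rw [if_neg hpτ]
      symm
      refine Finset.sum_eq_zero fun ρ _ => ?_
      rw [if_neg (by rintro ⟨h, _⟩; exact hpτ h)]
  simp only [step1]
  rw [Finset.sum_comm]
  refine Finset.sum_congr rfl fun ρ _ => ?_
  have step2 : ∀ τ, (if (∀ i ∉ S₁, τ i = σ i) ∧ (∀ i ∉ S₂, ρ i = τ i)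
        then μ τ * (μ ρ * v ρ) / Zf μ S₂ τ else 0)
      = (μ ρ * v ρ / Zf μ S₂ ρ) * (if (∀ i ∉ S₁, τ i = σ i) ∧ (∀ i ∉ S₂, τ i = ρ i)
          then μ τ else 0) := by
    intro τ
    by_cases hc : (∀ i ∉ S₁, τ i = σ i) ∧ (∀ i ∉ S₂, τ i = ρ i)
    · have hc' : ∀ i ∉ S₂, ρ i = τ i := fun i hi => (hc.2 i hi).symm
      rw [if_pos ⟨hc.1, hc'⟩, if_pos hc, Zf_congr hc.2]
      ring
    · rw [if_neg, if_neg hc]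
      · simp
      · rintro ⟨h1, h2⟩; exact hc ⟨h1, fun i hi => (h2 i hi).symm⟩
  simp only [step2]
  rw [← Finset.mul_sum]
  have : (∑ τ, if (∀ i ∉ S₁, τ i = σ i) ∧ (∀ i ∉ S₂, τ i = ρ i) then μ τ else 0)
      = Kf μ S₁ S₂ σ ρ := rfl
  rw [this]
  ring

lemma cExp_comm (hnn : ∀ σ, 0 ≤ μ σ) (S₁ S₂ : Finset ι) (v : (ι → Fin q) → ℝ)
    {σ : ι → Fin q} (hσ : 0 < μ σ) (W : ℝ) (hW : 0 < W)
    (hfact : ∀ ρ : ι → Fin q, 0 < μ ρ → (∀ i, i ∉ S₁ → i ∉ S₂ → ρ i = σ i) →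
      Kf μ S₁ S₂ σ ρ * W = Zf μ S₂ ρ * Zf μ S₁ σ ∧
      Kf μ S₂ S₁ σ ρ * W = Zf μ S₁ ρ * Zf μ S₂ σ) :
    cExp μ (fun τ => cExp μ v S₂ τ) S₁ σ = cExp μ (fun τ => cExp μ v S₁ τ) S₂ σ := by
  rw [cExp_cExp hnn S₁ S₂ v σ, cExp_cExp hnn S₂ S₁ v σ]
  have h1 : 0 < Zf μ S₁ σ := lt_of_lt_of_le hσ (le_Zf hnn fun i _ => rfl)
  have h2 : 0 < Zf μ S₂ σ := lt_of_lt_of_le hσ (le_Zf hnn fun i _ => rfl)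
  rw [div_eq_div_iff (ne_of_gt h1) (ne_of_gt h2), Finset.sum_mul, Finset.sum_mul]
  refine Finset.sum_congr rfl fun ρ _ => ?_
  rcases eq_or_lt_of_le (hnn ρ) with hρ | hρ
  · simp [← hρ]
  by_cases hD : ∀ i, i ∉ S₁ → i ∉ S₂ → ρ i = σ i
  · obtain ⟨e1, e2⟩ := hfact ρ hρ hD
    have z2ρ : 0 < Zf μ S₂ ρ := lt_of_lt_of_le hρ (le_Zf hnn fun i _ => rfl)
    have z1ρ : 0 < Zf μ S₁ ρ := lt_of_lt_of_le hρ (le_Zf hnn fun i _ => rfl)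
    have hK1 : Kf μ S₁ S₂ σ ρ = Zf μ S₂ ρ * Zf μ S₁ σ / W := by
      rw [eq_div_iff (ne_of_gt hW)]; exact e1
    have hK2 : Kf μ S₂ S₁ σ ρ = Zf μ S₁ ρ * Zf μ S₂ σ / W := by
      rw [eq_div_iff (ne_of_gt hW)]; exact e2
    rw [hK1, hK2]
    field_simp
  · have hD' : ¬ ∀ i, i ∉ S₂ → i ∉ S₁ → ρ i = σ i := fun h => hD fun i hi1 hi2 => h i hi2 hi1
    rw [Kf_eq_zero hD, Kf_eq_zero hD']
    simp

lemma walk_exit {V' : Type*} {H : SimpleGraph V'} {S : Finset V'} :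
    ∀ {x y : V'}, (w : H.Walk x y) → x ∈ S → y ∉ S →
      ∃ c, c ∈ w.support ∧ c ∉ S ∧ ∃ h ∈ S, H.Adj c h := by
  intro x y w
  induction w with
  | nil => intro hx hy; exact absurd hx hy
  | @cons u v y' hadj w ih =>
    intro hx hy
    by_cases hv : v ∈ S
    · obtain ⟨c, hcs, hc, hrest⟩ := ih hv hy
      exact ⟨c, by rw [SimpleGraph.Walk.support_cons]; exact List.mem_cons_of_mem _ hcs, hc, hrest⟩
    · refine ⟨v, ?_, hv, u, hx, hadj.symm⟩
      rw [SimpleGraph.Walk.support_cons]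
      exact List.mem_cons_of_mem _ w.start_mem_support

/-- A helper: variance difference identity. -/
lemma key_var (hnn : ∀ σ, 0 ≤ μ σ) (u b' : (ι → Fin q) → ℝ) (S : Finset ι)
    (hb : ∀ σ, μ σ ≠ 0 → cExp μ u S σ = b' σ) :
    expct μ (fun σ => u σ ^ 2) - expct μ (fun σ => b' σ ^ 2)
      = expct μ (fun σ => (u σ - b' σ) ^ 2) := by
  have hub : expct μ (fun σ => u σ * b' σ) = expct μ (fun σ => b' σ ^ 2) := by
    have e1 : expct μ (fun σ => u σ * b' σ) = expct μ (fun τ => cExp μ u S τ * u τ) := by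
      refine expct_congr fun σ hσ => ?_
      rw [← hb σ hσ]; ring
    have e2 : expct μ (fun σ => cExp μ (fun τ => cExp μ u S τ * u τ) S σ)
        = expct μ (fun τ => cExp μ u S τ * u τ) := expct_cExp hnn _ S
    have e3 : ∀ σ, cExp μ (fun τ => cExp μ u S τ * u τ) S σ
        = cExp μ u S σ * cExp μ u S σ := fun σ =>
      cExp_mul_left u (fun τ => cExp μ u S τ) S σ (fun τ hτ => cExp_congr u hτ)
    calc expct μ (fun σ => u σ * b' σ) = expct μ (fun τ => cExp μ u S τ * u τ) := e1
      _ = expct μ (fun σ => cExp μ (fun τ => cExp μ u S τ * u τ) S σ) := e2.symm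
      _ = expct μ (fun σ => cExp μ u S σ * cExp μ u S σ) := by simp only [e3]
      _ = expct μ (fun σ => b' σ ^ 2) := expct_congr fun σ hσ => by rw [hb σ hσ]; ring
  have expand : expct μ (fun σ => (u σ - b' σ) ^ 2)
      = expct μ (fun σ => u σ ^ 2) - 2 * expct μ (fun σ => u σ * b' σ)
        + expct μ (fun σ => b' σ ^ 2) := by
    simp only [expct, Finset.mul_sum]
    rw [← Finset.sum_sub_distrib, ← Finset.sum_add_distrib]
    refine Finset.sum_congr rfl fun σ _ => ?_
    ring
  rw [expand, hub]
  ring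

end Comm


set_option maxHeartbeats 1000000 in
/-- If `μ` is a distribution over `[q]^E` satisfying the conditional independence property
for the line graph of `G`, then for any `S₁, S₂ ⊆ E` with `∂S₁ ∩ S₂ = ∅`,
`E_μ[Var_{S₁}[μ_{S₂}[f]]] ≤ E_μ[Var_{S₁}[μ_{S₁∩S₂}[f]]]`. -/
theorem statement12 {V : Type*} [Fintype V] [DecidableEq V]
    (G : SimpleGraph V) [DecidableRel G.Adj] (q : ℕ)
    (μ : (↥G.edgeFinset → Fin q) → ℝ)
    (hnn : ∀ σ, 0 ≤ μ σ) (hsum : ∑ σ, μ σ = 1)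
    (hCI : ∀ A B C : Finset ↥G.edgeFinset,
      Disjoint A B → Disjoint A C → Disjoint B C →
      (∀ a ∈ A, ∀ b ∈ B, ∀ w : (lineG G).Walk a b, ∃ c ∈ C, c ∈ w.support) →
      ∀ η : ↥G.edgeFinset → Fin q,
        0 < (∑ τ, if ∀ i ∈ C, τ i = η i then μ τ else 0) →
        ∀ ζ : ↥G.edgeFinset → Fin q,
          (∑ τ, if (∀ i ∈ A ∪ B, τ i = ζ i) ∧ (∀ i ∈ C, τ i = η i) then μ τ else 0)
              / (∑ τ, if ∀ i ∈ C, τ i = η i then μ τ else 0)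
            = ((∑ τ, if (∀ i ∈ A, τ i = ζ i) ∧ (∀ i ∈ C, τ i = η i) then μ τ else 0)
              / (∑ τ, if ∀ i ∈ C, τ i = η i then μ τ else 0))
            * ((∑ τ, if (∀ i ∈ B, τ i = ζ i) ∧ (∀ i ∈ C, τ i = η i) then μ τ else 0)
              / (∑ τ, if ∀ i ∈ C, τ i = η i then μ τ else 0)))
    (S₁ S₂ : Finset ↥G.edgeFinset)
    (hbd : ∀ e, (e ∉ S₁ ∧ ∃ h ∈ S₁, (lineG G).Adj e h) → e ∉ S₂)
    (f : (↥G.edgeFinset → Fin q) → ℝ) :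
    expct μ (fun σ => cVar μ (fun τ => cExp μ f S₂ τ) S₁ σ)
      ≤ expct μ (fun σ => cVar μ (fun τ => cExp μ f (S₁ ∩ S₂) τ) S₁ σ) := by
  classical
  -- abbreviations
  set g : (↥G.edgeFinset → Fin q) → ℝ := fun τ => cExp μ f (S₁ ∩ S₂) τ with hgdef
  -- tower property : cExp μ f S₂ = cExp μ g S₂
  have step : (fun τ => cExp μ f S₂ τ) = (fun τ => cExp μ g S₂ τ) :=
    funext fun τ => (cExp_tower hnn f Finset.inter_subset_right τ).symm
  rw [step]
  -- the commutation property
  have hcomm : ∀ σ, μ σ ≠ 0 →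
      cExp μ (fun τ => cExp μ g S₂ τ) S₁ σ = cExp μ (fun τ => cExp μ g S₁ τ) S₂ σ := by
    intro σ hσ0
    have hσ : 0 < μ σ := lt_of_le_of_ne (hnn σ) (Ne.symm hσ0)
    set C : Finset ↥G.edgeFinset := Finset.univ \ (S₁ ∪ S₂) with hCdef
    have hCmem : ∀ i, i ∈ C ↔ (i ∉ S₁ ∧ i ∉ S₂) := by
      intro i
      simp [hCdef, Finset.mem_sdiff, Finset.mem_union, not_or]
    have hW : 0 < ∑ τ, if ∀ i ∈ C, τ i = σ i then μ τ else 0 := by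
      refine lt_of_lt_of_le hσ ?_
      have := Finset.single_le_sum
        (f := fun τ => if ∀ i ∈ C, τ i = σ i then μ τ else 0)
        (fun τ _ => by split <;> simp [hnn τ]) (Finset.mem_univ σ)
      rwa [if_pos (fun i _ => rfl)] at this
    refine cExp_comm hnn S₁ S₂ g hσ _ hW ?_
    intro ρ hρ hD
    have dAB : Disjoint (S₁ \ S₂) (S₂ \ S₁) := disjoint_sdiff_sdiff
    have dAC : Disjoint (S₁ \ S₂) C := by
      rw [Finset.disjoint_left]
      intro i hi hic
      rw [Finset.mem_sdiff] at hi
      exact ((hCmem i).1 hic).1 hi.1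
    have dBC : Disjoint (S₂ \ S₁) C := by
      rw [Finset.disjoint_left]
      intro i hi hic
      rw [Finset.mem_sdiff] at hi
      exact ((hCmem i).1 hic).2 hi.1
    have hwalks : ∀ a ∈ S₁ \ S₂, ∀ b ∈ S₂ \ S₁, ∀ w : (lineG G).Walk a b,
        ∃ c ∈ C, c ∈ w.support := by
      intro x hx y hy w
      rw [Finset.mem_sdiff] at hx hy
      obtain ⟨c, hcs, hc1, hrest⟩ := walk_exit w hx.1 hy.2
      have hc2 : c ∉ S₂ := hbd c ⟨hc1, hrest⟩
      exact ⟨c, (hCmem c).2 ⟨hc1, hc2⟩, hcs⟩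
    constructor
    · -- first factorization
      have hEq := hCI (S₁ \ S₂) (S₂ \ S₁) C dAB dAC dBC hwalks σ hW
        (fun i => if i ∈ S₂ then σ i else ρ i)
      beta_reduce at hEq
      have c1 : (∑ τ, if (∀ i ∈ S₁ \ S₂ ∪ S₂ \ S₁, τ i = if i ∈ S₂ then σ i else ρ i)
            ∧ (∀ i ∈ C, τ i = σ i) then μ τ else 0) = Kf μ S₁ S₂ σ ρ := by
        unfold Kf
        refine Finset.sum_congr rfl fun τ _ => if_congr ?_ rfl rfl
        constructor
        · rintro ⟨hU, hC'⟩
          constructor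
          · intro i hi1
            by_cases hi2 : i ∈ S₂
            · have := hU i (Finset.mem_union_right _ (Finset.mem_sdiff.2 ⟨hi2, hi1⟩))
              simpa [hi2] using this
            · exact hC' i ((hCmem i).2 ⟨hi1, hi2⟩)
          · intro i hi2
            by_cases hi1 : i ∈ S₁
            · have := hU i (Finset.mem_union_left _ (Finset.mem_sdiff.2 ⟨hi1, hi2⟩))
              simpa [hi2] using this
            · exact (hC' i ((hCmem i).2 ⟨hi1, hi2⟩)).trans (hD i hi1 hi2).symm
        · rintro ⟨h1, h2⟩
          constructor
          · intro i hi
            rcases Finset.mem_union.1 hi with hiA | hiB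
            · rw [Finset.mem_sdiff] at hiA
              simpa [hiA.2] using h2 i hiA.2
            · rw [Finset.mem_sdiff] at hiB
              simpa [hiB.1] using h1 i hiB.2
          · intro i hic
            exact h1 i ((hCmem i).1 hic).1
      have c2 : (∑ τ, if (∀ i ∈ S₁ \ S₂, τ i = if i ∈ S₂ then σ i else ρ i)
            ∧ (∀ i ∈ C, τ i = σ i) then μ τ else 0) = Zf μ S₂ ρ := by
        unfold Zf
        refine Finset.sum_congr rfl fun τ _ => if_congr ?_ rfl rfl
        constructor
        · rintro ⟨hA, hC'⟩
          intro i hi2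
          by_cases hi1 : i ∈ S₁
          · have := hA i (Finset.mem_sdiff.2 ⟨hi1, hi2⟩)
            simpa [hi2] using this
          · exact (hC' i ((hCmem i).2 ⟨hi1, hi2⟩)).trans (hD i hi1 hi2).symm
        · intro h
          constructor
          · intro i hi
            rw [Finset.mem_sdiff] at hi
            simpa [hi.2] using h i hi.2
          · intro i hic
            exact (h i ((hCmem i).1 hic).2).trans
              (hD i ((hCmem i).1 hic).1 ((hCmem i).1 hic).2)
      have c3 : (∑ τ, if (∀ i ∈ S₂ \ S₁, τ i = if i ∈ S₂ then σ i else ρ i)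
            ∧ (∀ i ∈ C, τ i = σ i) then μ τ else 0) = Zf μ S₁ σ := by
        unfold Zf
        refine Finset.sum_congr rfl fun τ _ => if_congr ?_ rfl rfl
        constructor
        · rintro ⟨hB, hC'⟩
          intro i hi1
          by_cases hi2 : i ∈ S₂
          · have := hB i (Finset.mem_sdiff.2 ⟨hi2, hi1⟩)
            simpa [hi2] using this
          · exact hC' i ((hCmem i).2 ⟨hi1, hi2⟩)
        · intro h
          constructor
          · intro i hi
            rw [Finset.mem_sdiff] at hi
            simpa [hi.1] using h i hi.2
          · intro i hic
            exact h i ((hCmem i).1 hic).1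
      rw [c1, c2, c3, div_mul_div_comm,
        div_eq_div_iff (ne_of_gt hW) (ne_of_gt (mul_pos hW hW))] at hEq
      exact mul_right_cancel₀ (ne_of_gt hW) (by linear_combination hEq)
    · -- second factorization
      have hEq := hCI (S₁ \ S₂) (S₂ \ S₁) C dAB dAC dBC hwalks σ hW
        (fun i => if i ∈ S₂ then ρ i else σ i)
      beta_reduce at hEq
      have c1 : (∑ τ, if (∀ i ∈ S₁ \ S₂ ∪ S₂ \ S₁, τ i = if i ∈ S₂ then ρ i else σ i)
            ∧ (∀ i ∈ C, τ i = σ i) then μ τ else 0) = Kf μ S₂ S₁ σ ρ := by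
        unfold Kf
        refine Finset.sum_congr rfl fun τ _ => if_congr ?_ rfl rfl
        constructor
        · rintro ⟨hU, hC'⟩
          constructor
          · intro i hi2
            by_cases hi1 : i ∈ S₁
            · have := hU i (Finset.mem_union_left _ (Finset.mem_sdiff.2 ⟨hi1, hi2⟩))
              simpa [hi2] using this
            · exact hC' i ((hCmem i).2 ⟨hi1, hi2⟩)
          · intro i hi1
            by_cases hi2 : i ∈ S₂
            · have := hU i (Finset.mem_union_right _ (Finset.mem_sdiff.2 ⟨hi2, hi1⟩))
              simpa [hi2] using this
            · exact (hC' i ((hCmem i).2 ⟨hi1, hi2⟩)).trans (hD i hi1 hi2).symm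
        · rintro ⟨h1, h2⟩
          constructor
          · intro i hi
            rcases Finset.mem_union.1 hi with hiA | hiB
            · rw [Finset.mem_sdiff] at hiA
              simpa [hiA.2] using h1 i hiA.2
            · rw [Finset.mem_sdiff] at hiB
              simpa [hiB.1] using h2 i hiB.2
          · intro i hic
            exact h1 i ((hCmem i).1 hic).2
      have c2 : (∑ τ, if (∀ i ∈ S₁ \ S₂, τ i = if i ∈ S₂ then ρ i else σ i)
            ∧ (∀ i ∈ C, τ i = σ i) then μ τ else 0) = Zf μ S₂ σ := by
        unfold Zf
        refine Finset.sum_congr rfl fun τ _ => if_congr ?_ rfl rfl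
        constructor
        · rintro ⟨hA, hC'⟩
          intro i hi2
          by_cases hi1 : i ∈ S₁
          · have := hA i (Finset.mem_sdiff.2 ⟨hi1, hi2⟩)
            simpa [hi2] using this
          · exact hC' i ((hCmem i).2 ⟨hi1, hi2⟩)
        · intro h
          constructor
          · intro i hi
            rw [Finset.mem_sdiff] at hi
            simpa [hi.2] using h i hi.2
          · intro i hic
            exact h i ((hCmem i).1 hic).2
      have c3 : (∑ τ, if (∀ i ∈ S₂ \ S₁, τ i = if i ∈ S₂ then ρ i else σ i)
            ∧ (∀ i ∈ C, τ i = σ i) then μ τ else 0) = Zf μ S₁ ρ := by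
        unfold Zf
        refine Finset.sum_congr rfl fun τ _ => if_congr ?_ rfl rfl
        constructor
        · rintro ⟨hB, hC'⟩
          intro i hi1
          by_cases hi2 : i ∈ S₂
          · have := hB i (Finset.mem_sdiff.2 ⟨hi2, hi1⟩)
            simpa [hi2] using this
          · exact (hC' i ((hCmem i).2 ⟨hi1, hi2⟩)).trans (hD i hi1 hi2).symm
        · intro h
          constructor
          · intro i hi
            rw [Finset.mem_sdiff] at hi
            simpa [hi.1] using h i hi.2
          · intro i hic
            exact (h i ((hCmem i).1 hic).1).trans
              (hD i ((hCmem i).1 hic).1 ((hCmem i).1 hic).2)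
      rw [c1, c2, c3, div_mul_div_comm,
        div_eq_div_iff (ne_of_gt hW) (ne_of_gt (mul_pos hW hW))] at hEq
      exact mul_right_cancel₀ (ne_of_gt hW) (by linear_combination hEq)
  -- now the main chain
  simp only [cVar]
  rw [expct_sub, expct_sub, expct_cExp hnn _ S₁, expct_cExp hnn _ S₁]
  have hbb : expct μ (fun σ => cExp μ (fun τ => cExp μ g S₂ τ) S₁ σ ^ 2)
      = expct μ (fun σ => cExp μ (fun τ => cExp μ g S₁ τ) S₂ σ ^ 2) :=
    expct_congr fun σ hσ => by rw [hcomm σ hσ]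
  have kv1 := key_var hnn (fun τ => cExp μ g S₂ τ)
    (fun σ => cExp μ (fun τ => cExp μ g S₁ τ) S₂ σ) S₁ hcomm
  have kv2 := key_var hnn g (fun σ => cExp μ g S₁ σ) S₁ (fun σ _ => rfl)
  have jensen : expct μ (fun σ => (cExp μ g S₂ σ
        - cExp μ (fun τ => cExp μ g S₁ τ) S₂ σ) ^ 2)
      ≤ expct μ (fun σ => (g σ - cExp μ g S₁ σ) ^ 2) := by
    calc expct μ (fun σ => (cExp μ g S₂ σ - cExp μ (fun τ => cExp μ g S₁ τ) S₂ σ) ^ 2)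
        = expct μ (fun σ => (cExp μ (fun τ => g τ - cExp μ g S₁ τ) S₂ σ) ^ 2) := by
          unfold expct
          refine Finset.sum_congr rfl fun σ _ => ?_
          beta_reduce
          rw [cExp_sub g (fun τ => cExp μ g S₁ τ) S₂ σ]
      _ ≤ expct μ (fun σ => cExp μ (fun τ => (g τ - cExp μ g S₁ τ) ^ 2) S₂ σ) :=
          expct_mono hnn (fun σ => cExp_sq_le hnn _ S₂ σ)
      _ = expct μ (fun σ => (g σ - cExp μ g S₁ σ) ^ 2) := expct_cExp hnn _ S₂
  linarith [kv1, kv2, jensen, hbb]
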